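/- An idempotent word of FIM(X) avoids the letter x (meaning its path in the Cayley graph of FG(X) never traverses the edge from ε to x) if and only if it is derivable from the nonterminal Z_x in the grammar with nonterminals {Z_a : a ∈ X^±} and productions Z_a → Z_a Z_a, Z_a → y Z_{ȳ} ȳ for each y ∈ X^± with y ≠ a, and Z_a → ε. -/

import Mathlib

/-- The symmetric alphabet `X^± = X ∪ X̄`, encoded as pairs (letter, sign). -/
abbrev Letter (X : Type) : Type := X × Bool

/-- Formal inverse of a letter. -/
def linv {X : Type} (a : Letter X) : Letter X := (a.1, !a.2)

/-- `wordInv v` is `v̄`: the reverse of `v` with every letter replaced by its inverse. -/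
def wordInv {X : Type} (v : List (Letter X)) : List (Letter X) := v.reverse.map linv

/-- The vertex set of the Munn tree of `w`: reductions of all prefixes of `w` in FG(X). -/
def munn {X : Type} (w : List (Letter X)) : Set (FreeGroup X) :=
  {g | ∃ p : List (Letter X), p <+: w ∧ FreeGroup.mk p = g}

/-- A word represents an idempotent of FIM(X) iff it reduces to 1 in FG(X). -/
def IsIdemWord {X : Type} (w : List (Letter X)) : Prop := FreeGroup.mk w = 1

/-- A word is reduced iff it has no adjacent mutually inverse letters. -/
def Reduced {X : Type} (w : List (Letter X)) : Prop :=
  List.Chain' (fun a b => b ≠ linv a) w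

/-- The Munn tree of `w` contains the edge from (the reduced word) `p` to `p · a`. -/
def EdgeIn {X : Type} (w : List (Letter X)) (p : List (Letter X)) (a : Letter X) : Prop :=
  Reduced (p ++ [a]) ∧ FreeGroup.mk p ∈ munn w ∧ FreeGroup.mk (p ++ [a]) ∈ munn w

/-- An idempotent word avoids `x` iff its Munn tree omits the edge `(ε, x)`. -/
def Avoids {X : Type} (w : List (Letter X)) (x : Letter X) : Prop := ¬ EdgeIn w [] x

/-- Equality in the free inverse monoid FIM(X): equality of Munn trees. -/
def EqFIM {X : Type} (u v : List (Letter X)) : Prop :=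
  FreeGroup.mk u = FreeGroup.mk v ∧ munn u = munn v

/-- The alphabet `X^± ∪ {#}`. -/
abbrev HSym (X : Type) : Type := Letter X ⊕ Unit

/-- The hashSym symbol. -/
def hashSym {X : Type} : HSym X := Sum.inr ()

/-- `encode u v = u # v̄`. -/
def encode {X : Type} (u v : List (Letter X)) : List (HSym X) :=
  u.map Sum.inl ++ hashSym :: (wordInv v).map Sum.inl


instance {T N : Type} [DecidableEq T] [DecidableEq N] : DecidableEq (ContextFreeRule T N) :=
  fun a b => decidable_of_iff (a.input = b.input ∧ a.output = b.output)
    (by cases a; cases b; simp)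

/-- Interleaving `e₁x₁e₂x₂⋯e_mx_m`. -/
def interE {X : Type} (es : List (List (Letter X))) (xs : List (Letter X)) : List (Letter X) :=
  (List.zipWith (fun e x => e ++ [x]) es xs).flatten

/-- Interleaving `y₁f₁y₂f₂⋯y_nf_n`. -/
def interF {X : Type} (ys : List (Letter X)) (fs : List (List (Letter X))) : List (Letter X) :=
  (List.zipWith (fun y f => y :: f) ys fs).flatten

/-- Derivability of a terminal word from a given nonterminal of a grammar. -/
def DerivesFrom {T : Type} (g : ContextFreeGrammar T) (n : g.NT) (w : List T) : Prop :=
  g.Derives [Symbol.nonterminal n] (w.map Symbol.terminal)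

/-- The grammar with nonterminals `Z_a` (`a ∈ X^±`), start symbol `Z_x`, and productions
`Z_a → Z_a Z_a`, `Z_a → y Z_{ȳ} ȳ` (for `y ∈ X^±`, `y ≠ a`) and `Z_a → ε`. -/
def gZ (X : Type) [Fintype X] [DecidableEq X] (x : Letter X) :
    ContextFreeGrammar (Letter X) where
  NT := Letter X
  initial := x
  rules :=
    (Finset.univ.image fun a : Letter X =>
      ⟨a, [Symbol.nonterminal a, Symbol.nonterminal a]⟩)
    ∪ (Finset.univ.image fun a : Letter X => ⟨a, []⟩)
    ∪ (((Finset.univ ×ˢ Finset.univ).filter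
          (fun p : Letter X × Letter X => p.2 ≠ p.1)).image
        fun p => ⟨p.1, [Symbol.terminal p.2, Symbol.nonterminal (linv p.2),
                        Symbol.terminal (linv p.2)]⟩)

section MunnAux
variable {X : Type}

@[simp] lemma linv_linv (a : Letter X) : linv (linv a) = a := by
  simp [linv]

lemma invRev_singleton (a : Letter X) : FreeGroup.invRev [a] = [linv a] := by
  simp [FreeGroup.invRev, linv]

lemma mk_singleton_inv (a : Letter X) :
    (FreeGroup.mk [a])⁻¹ = FreeGroup.mk [linv a] := by
  rw [FreeGroup.inv_mk, invRev_singleton]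

lemma mk_singleton_ne_one [DecidableEq X] (a : Letter X) : FreeGroup.mk [a] ≠ 1 := by
  intro h
  have := congrArg FreeGroup.toWord h
  rw [FreeGroup.toWord_mk, FreeGroup.toWord_one, FreeGroup.reduce_singleton] at this
  exact List.cons_ne_nil _ _ this

variable [DecidableEq X]

lemma chain'_reduce (L : List (Letter X)) :
    List.Chain' (fun a b => b ≠ linv a) (FreeGroup.reduce L) := by
  induction L with
  | nil => simp [List.Chain']
  | cons x L ih =>
    rw [FreeGroup.reduce.cons]
    rcases h : FreeGroup.reduce L with _ | ⟨y, t⟩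
    · simp [List.Chain']
    · rw [h] at ih
      by_cases hc : x.1 = y.1 ∧ x.2 = !y.2
      · simpa [hc, List.Chain'] using ih.tail
      · simp only [if_neg hc]
        refine List.IsChain.cons_cons ?_ ih
        intro he
        exact hc ⟨by simp [he, linv], by simp [he, linv]⟩

lemma reduce_of_chain' {L : List (Letter X)}
    (h : List.Chain' (fun a b => b ≠ linv a) L) : FreeGroup.reduce L = L := by
  induction L with
  | nil => rfl
  | cons x L ih =>
    have ht := ih h.tail
    rw [FreeGroup.reduce.cons, ht]
    rcases L with _ | ⟨y, t⟩
    · rfl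
    · have hxy : y ≠ linv x := (List.isChain_cons_cons.mp h).1
      have : ¬ (x.1 = y.1 ∧ x.2 = !y.2) := by
        rintro ⟨h1, h2⟩
        exact hxy (by cases x; cases y; simp_all [linv])
      simp [this]

lemma toWord_chain' (g : FreeGroup X) :
    List.Chain' (fun a b => b ≠ linv a) g.toWord := by
  rw [← FreeGroup.mk_toWord (x := g), FreeGroup.toWord_mk]
  exact chain'_reduce _

/-- Multiplying a free group element by a single generator either extends
the reduced word or cancels the last letter. -/
lemma toWord_mul_single (g : FreeGroup X) (a : Letter X) :
    (∃ t, g.toWord = t ++ [linv a] ∧ (g * FreeGroup.mk [a]).toWord = t) ∨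
      (g * FreeGroup.mk [a]).toWord = g.toWord ++ [a] := by
  rcases List.eq_nil_or_concat g.toWord with h0 | ⟨t, b, hc'⟩
  · right
    have hg : g = 1 := FreeGroup.toWord_eq_nil_iff.mp h0
    subst hg
    rw [one_mul, FreeGroup.toWord_one, List.nil_append, FreeGroup.toWord_mk]
    exact reduce_of_chain' (by simp [List.Chain'])
  · have hc : g.toWord = t ++ [b] := by simpa using hc'
    have hgmk : g = FreeGroup.mk (t ++ [b]) := by
      rw [← hc, FreeGroup.mk_toWord]
    have htred : List.Chain' (fun a b => b ≠ linv a) (t ++ [b]) := by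
      rw [← hc]; exact toWord_chain' g
    by_cases hb : b = linv a
    · left
      refine ⟨t, by rw [hc, hb], ?_⟩
      have : g * FreeGroup.mk [a] = FreeGroup.mk t := by
        rw [hgmk, hb, FreeGroup.mul_mk, List.append_assoc, ← FreeGroup.mul_mk,
          ← FreeGroup.mul_mk, ← mk_singleton_inv, inv_mul_cancel, mul_one]
      rw [this, FreeGroup.toWord_mk,
        reduce_of_chain' (htred.prefix ⟨[b], rfl⟩)]
    · right
      have hred : List.Chain' (fun a b => b ≠ linv a) (g.toWord ++ [a]) := by
        rw [List.Chain', List.isChain_append]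
        refine ⟨toWord_chain' g, by simp, ?_⟩
        intro p hp q hq
        rw [hc] at hp
        simp at hp hq
        subst hp; subst hq
        exact fun he => hb (by rw [he, linv_linv])
      have : g * FreeGroup.mk [a] = FreeGroup.mk (g.toWord ++ [a]) := by
        rw [← FreeGroup.mul_mk, FreeGroup.mk_toWord]
      rw [this, FreeGroup.toWord_mk, reduce_of_chain' hred]

omit [DecidableEq X] in
lemma prefix_split {l u v : List (Letter X)} (h : l <+: u ++ v) :
    l <+: u ∨ ∃ p, l = u ++ p ∧ p <+: v := by
  rcases le_or_gt l.length u.length with hl | hl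
  · left
    have : l <+: List.take u.length (u ++ v) := List.prefix_take_iff.mpr ⟨h, hl⟩
    simpa [List.take_append] using this
  · right
    have hlt : l = List.take l.length (u ++ v) := List.prefix_iff_eq_take.mp h
    refine ⟨List.take (l.length - u.length) v, ?_, List.take_prefix _ _⟩
    conv_lhs => rw [hlt, List.take_append,
      List.take_of_length_le (le_of_lt hl)]

/-- Any prefix of the reduction of `p` is the reduction of some prefix of `p`. -/
lemma prefix_reach (p : List (Letter X)) :
    ∀ q, q <+: (FreeGroup.mk p).toWord →
      ∃ p', p' <+: p ∧ FreeGroup.mk p' = FreeGroup.mk q := by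
  induction p using List.reverseRecOn with
  | nil =>
    intro q hq
    rw [← FreeGroup.one_eq_mk, FreeGroup.toWord_one] at hq
    rw [List.prefix_nil] at hq
    exact ⟨[], List.nil_prefix, by rw [hq]⟩
  | append_singleton p a ih =>
    intro q hq
    have hmul : FreeGroup.mk (p ++ [a]) = FreeGroup.mk p * FreeGroup.mk [a] :=
      (FreeGroup.mul_mk).symm
    rcases toWord_mul_single (FreeGroup.mk p) a with ⟨t, ht, hres⟩ | hres
    · rw [hmul, hres] at hq
      have hqp : q <+: (FreeGroup.mk p).toWord := hq.trans ⟨[linv a], ht.symm⟩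
      obtain ⟨p', hp', hval⟩ := ih q hqp
      exact ⟨p', hp'.trans (List.prefix_append _ _), hval⟩
    · rw [hmul, hres] at hq
      rcases List.prefix_concat_iff.mp hq with hq | hq
      · refine ⟨p ++ [a], List.prefix_refl _, ?_⟩
        conv_lhs => rw [← FreeGroup.mk_toWord (x := FreeGroup.mk (p ++ [a]))]
        rw [hmul, hres, hq]
      · obtain ⟨p', hp', hval⟩ := ih q hq
        exact ⟨p', hp'.trans (List.prefix_append _ _), hval⟩

lemma munn_of_toWord_prefix {w : List (Letter X)} {g : FreeGroup X}
    (hg : g ∈ munn w) {q : List (Letter X)} (hq : q <+: g.toWord) :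
    FreeGroup.mk q ∈ munn w := by
  obtain ⟨p, hp, rfl⟩ := hg
  obtain ⟨p', hp', hval⟩ := prefix_reach p q hq
  exact ⟨p', hp'.trans hp, hval⟩

omit [DecidableEq X] in
lemma one_mem_munn (w : List (Letter X)) : (1 : FreeGroup X) ∈ munn w :=
  ⟨[], List.nil_prefix, FreeGroup.one_eq_mk.symm⟩

omit [DecidableEq X] in
lemma munn_append_left (u v : List (Letter X)) : munn u ⊆ munn (u ++ v) := by
  rintro g ⟨p, hp, rfl⟩
  exact ⟨p, hp.trans (List.prefix_append _ _), rfl⟩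

omit [DecidableEq X] in
lemma munn_append {u : List (Letter X)} (h : FreeGroup.mk u = 1)
    (v : List (Letter X)) : munn (u ++ v) = munn u ∪ munn v := by
  ext g
  constructor
  · rintro ⟨p, hp, rfl⟩
    rcases prefix_split hp with hp | ⟨p', rfl, hp'⟩
    · exact Or.inl ⟨p, hp, rfl⟩
    · right
      exact ⟨p', hp', by rw [← FreeGroup.mul_mk, h, one_mul]⟩
  · rintro (⟨p, hp, rfl⟩ | ⟨p, hp, rfl⟩)
    · exact munn_append_left u v ⟨p, hp, rfl⟩
    · exact ⟨u ++ p, (List.prefix_append_right_inj u).mpr hp,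
        by rw [← FreeGroup.mul_mk, h, one_mul]⟩

omit [DecidableEq X] in
lemma avoids_iff {w : List (Letter X)} {x : Letter X} :
    Avoids w x ↔ FreeGroup.mk [x] ∉ munn w := by
  unfold Avoids EdgeIn
  constructor
  · intro h hm
    exact h ⟨by simp [Reduced, List.Chain'], ⟨[], List.nil_prefix, rfl⟩, by simpa using hm⟩
  · intro h he
    exact h (by simpa using he.2.2)

end MunnAux

/-- The language derivable from the nonterminal `Z_a`. -/
inductive D {X : Type} : Letter X → List (Letter X) → Prop
  | eps (a : Letter X) : D a []
  | cat {a : Letter X} {u v : List (Letter X)} : D a u → D a v → D a (u ++ v)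
  | wrap {a y : Letter X} {u : List (Letter X)} (h : y ≠ a) :
      D (linv y) u → D a (y :: u ++ [linv y])

section Semantics
variable {X : Type} [DecidableEq X]

lemma D_sound {x : Letter X} {w : List (Letter X)} (h : D x w) :
    FreeGroup.mk w = 1 ∧ FreeGroup.mk [x] ∉ munn w := by
  induction h with
  | eps a =>
    refine ⟨FreeGroup.one_eq_mk.symm, ?_⟩
    rintro ⟨p, hp, hval⟩
    rw [List.prefix_nil] at hp
    subst hp
    exact mk_singleton_ne_one a (by rw [← hval, FreeGroup.one_eq_mk])
  | @cat a u v hu hv ihu ihv =>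
    refine ⟨by rw [← FreeGroup.mul_mk, ihu.1, ihv.1, one_mul], ?_⟩
    rw [munn_append ihu.1]
    rintro (h | h)
    · exact ihu.2 h
    · exact ihv.2 h
  | @wrap a y u hne hu ih =>
    have hmk : FreeGroup.mk (y :: u ++ [linv y]) = 1 := by
      have : (y :: u ++ [linv y] : List (Letter X)) = [y] ++ u ++ [linv y] := by simp
      rw [this, ← FreeGroup.mul_mk, ← FreeGroup.mul_mk, ih.1, mul_one,
        ← mk_singleton_inv, mul_inv_cancel]
    refine ⟨hmk, ?_⟩
    rintro ⟨p, hp, hval⟩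
    rw [show (y :: u) ++ [linv y] = y :: (u ++ [linv y]) by simp] at hp
    rcases p with _ | ⟨b, p'⟩
    · exact mk_singleton_ne_one a (by rw [← hval, FreeGroup.one_eq_mk])
    · rw [List.cons_prefix_cons] at hp
      obtain ⟨rfl, hp'⟩ := hp
      rcases List.prefix_concat_iff.mp hp' with rfl | hp'
      · rw [← List.cons_append] at hval
        rw [hmk] at hval
        exact mk_singleton_ne_one a hval.symm
      · -- p = y :: p' with p' a prefix of u; mk p = mk [a] forces [linv b, a] reachable
        have hval' : FreeGroup.mk p' = FreeGroup.mk [linv b, a] := by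
          have h1 : FreeGroup.mk (b :: p') = FreeGroup.mk [b] * FreeGroup.mk p' := by
            rw [FreeGroup.mul_mk]; rfl
          have : FreeGroup.mk [b] * FreeGroup.mk p' = FreeGroup.mk [a] := by
            rw [← h1, hval]
          calc FreeGroup.mk p'
              = (FreeGroup.mk [b])⁻¹ * (FreeGroup.mk [b] * FreeGroup.mk p') := by group
            _ = FreeGroup.mk [linv b] * FreeGroup.mk [a] := by rw [this, mk_singleton_inv]
            _ = FreeGroup.mk [linv b, a] := by rw [FreeGroup.mul_mk]; rfl
        have hred : (FreeGroup.mk p').toWord = [linv b, a] := by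
          rw [hval', FreeGroup.toWord_mk]
          refine reduce_of_chain' ?_
          refine List.isChain_cons_cons.mpr ⟨?_, by simp⟩
          intro he
          exact hne (by rw [he, linv_linv])
        have : FreeGroup.mk [linv b] ∈ munn u := by
          refine munn_of_toWord_prefix (g := FreeGroup.mk p') ⟨p', hp', rfl⟩ ?_
          rw [hred]
          exact ⟨[a], rfl⟩
        exact ih.2 this
  end Semantics


section Complete
variable {X : Type} [DecidableEq X]

lemma D_complete : ∀ (n : ℕ) (x : Letter X) (w : List (Letter X)), w.length ≤ n →
    FreeGroup.mk w = 1 → FreeGroup.mk [x] ∉ munn w → D x w := by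
  intro n
  induction n with
  | zero =>
    intro x w hlen _ _
    rw [Nat.le_zero, List.length_eq_zero_iff] at hlen
    exact hlen ▸ D.eps x
  | succ n ih =>
    intro x w hlen hone havoid
    rcases eq_or_ne w [] with rfl | hne
    · exact D.eps x
    have hwpos : 0 < w.length := List.length_pos_iff.mpr hne
    have hP : ∃ k, 0 < k ∧ FreeGroup.mk (w.take k) = 1 :=
      ⟨w.length, hwpos, by rwa [List.take_length]⟩
    have hk1 : 0 < Nat.find hP := (Nat.find_spec hP).1
    have hk2 : FreeGroup.mk (w.take (Nat.find hP)) = 1 := (Nat.find_spec hP).2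
    have hkle : Nat.find hP ≤ w.length :=
      Nat.find_le ⟨hwpos, by rwa [List.take_length]⟩
    by_cases hlt : Nat.find hP < w.length
    · -- first return strictly inside: split the word
      have hsplit : w.take (Nat.find hP) ++ w.drop (Nat.find hP) = w :=
        List.take_append_drop _ w
      have hone' : FreeGroup.mk (w.take (Nat.find hP) ++ w.drop (Nat.find hP)) = 1 := by
        rwa [hsplit]
      rw [← FreeGroup.mul_mk, hk2, one_mul] at hone'
      have hmunn : munn w = munn (w.take (Nat.find hP)) ∪ munn (w.drop (Nat.find hP)) := by
        conv_lhs => rw [← hsplit]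
        rw [munn_append hk2]
      rw [hmunn] at havoid
      have hav1 : FreeGroup.mk [x] ∉ munn (w.take (Nat.find hP)) := fun h => havoid (Or.inl h)
      have hav2 : FreeGroup.mk [x] ∉ munn (w.drop (Nat.find hP)) := fun h => havoid (Or.inr h)
      have hl1 : (w.take (Nat.find hP)).length ≤ n := by
        rw [List.length_take]
        omega
      have hl2 : (w.drop (Nat.find hP)).length ≤ n := by
        rw [List.length_drop]
        omega
      have := D.cat (ih x _ hl1 hk2 hav1) (ih x _ hl2 hone' hav2)
      rwa [hsplit] at this
    · -- w is a first-return word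
      have hk_len : Nat.find hP = w.length := le_antisymm hkle (not_lt.mp hlt)
      have hnr : ∀ p, p <+: w → p ≠ [] → p.length < w.length → FreeGroup.mk p ≠ 1 := by
        intro p hp hpne hplen h1
        have hpl : 0 < p.length := List.length_pos_iff.mpr hpne
        have hpt : p = w.take p.length := List.prefix_iff_eq_take.mp hp
        exact Nat.find_min hP (by omega) ⟨hpl, by rw [← hpt]; exact h1⟩
      obtain ⟨y, t, rfl⟩ := List.exists_cons_of_ne_nil hne
      rcases List.eq_nil_or_concat t with rfl | ⟨u, z, hcz⟩
      · exact absurd hone (mk_singleton_ne_one y)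
      have ht : t = u ++ [z] := by simpa using hcz
      subst ht
      -- every proper nonempty prefix reduces to a word starting with y
      have hhead : ∀ p : List (Letter X), p <+: y :: (u ++ [z]) → p ≠ [] →
          p.length < (y :: (u ++ [z])).length →
          ∃ r, (FreeGroup.mk p).toWord = y :: r := by
        intro p
        induction p using List.reverseRecOn with
        | nil => intro _ h _; exact absurd rfl h
        | append_singleton p₀ a ihp =>
          intro hp hne2 hplen
          rcases eq_or_ne p₀ [] with rfl | hp0ne
          · rw [List.nil_append] at hp ⊢
            have hay : a = y := (List.cons_prefix_cons.mp hp).1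
            subst hay
            exact ⟨[], by rw [FreeGroup.toWord_mk, FreeGroup.reduce_singleton]⟩
          · have hp0 : p₀ <+: y :: (u ++ [z]) := (List.prefix_append p₀ [a]).trans hp
            have hp0len : p₀.length < (y :: (u ++ [z])).length := by
              have : p₀.length < (p₀ ++ [a]).length := by simp
              omega
            obtain ⟨r₀, hr₀⟩ := ihp hp0 hp0ne hp0len
            have hmul : FreeGroup.mk (p₀ ++ [a]) = FreeGroup.mk p₀ * FreeGroup.mk [a] :=
              FreeGroup.mul_mk.symm
            rcases toWord_mul_single (FreeGroup.mk p₀) a with ⟨t', ht', hres⟩ | hres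
            · rw [hr₀] at ht'
              rcases t' with _ | ⟨c, t''⟩
              · exfalso
                have h1 : FreeGroup.mk (p₀ ++ [a]) = 1 := by
                  rw [← FreeGroup.toWord_eq_nil_iff, hmul, hres]
                exact hnr _ hp hne2 hplen h1
              · rw [List.cons_append] at ht'
                injection ht' with hcy _
                exact ⟨t'', by rw [hmul, hres, ← hcy]⟩
            · exact ⟨r₀ ++ [a], by rw [hmul, hres, hr₀, List.cons_append]⟩
      -- the last letter must be the inverse of the first
      have hyu : FreeGroup.mk (y :: u) = FreeGroup.mk [linv z] := by
        have h1 : FreeGroup.mk ((y :: u) ++ [z]) = 1 := by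
          rw [List.cons_append]; exact hone
        rw [← FreeGroup.mul_mk] at h1
        rw [← mk_singleton_inv]
        exact eq_inv_of_mul_eq_one_left h1
      have hzy : z = linv y := by
        have hprefix : (y :: u) <+: y :: (u ++ [z]) :=
          List.cons_prefix_cons.mpr ⟨rfl, List.prefix_append u [z]⟩
        obtain ⟨r, hr⟩ := hhead (y :: u) hprefix (by simp) (by simp)
        rw [hyu, FreeGroup.toWord_mk, FreeGroup.reduce_singleton] at hr
        injection hr with h2 _
        rw [← h2, linv_linv]
      subst hzy
      have hyu' : FreeGroup.mk (y :: u) = FreeGroup.mk [y] := by rw [hyu, linv_linv]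
      have hu1 : FreeGroup.mk u = 1 := by
        have h2 : FreeGroup.mk [y] * FreeGroup.mk u = FreeGroup.mk [y] := by
          rw [FreeGroup.mul_mk, List.singleton_append]; exact hyu'
        exact mul_left_cancel (h2.trans (mul_one _).symm)
      have huavoid : FreeGroup.mk [linv y] ∉ munn u := by
        rintro ⟨p, hp, hval⟩
        have hyp : (y :: p) <+: y :: (u ++ [linv y]) :=
          List.cons_prefix_cons.mpr ⟨rfl, hp.trans (List.prefix_append u [linv y])⟩
        refine hnr (y :: p) hyp (by simp) ?_ ?_
        · have hle := hp.length_le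
          simp only [List.length_cons, List.length_append, List.length_singleton]
          omega
        · rw [show (y :: p) = [y] ++ p from rfl, ← FreeGroup.mul_mk, hval,
            ← mk_singleton_inv, mul_inv_cancel]
      have hyx : y ≠ x := by
        rintro rfl
        exact havoid ⟨[y], List.cons_prefix_cons.mpr ⟨rfl, List.nil_prefix⟩, rfl⟩
      have hulen : u.length ≤ n := by
        simp only [List.length_cons, List.length_append] at hlen
        omega
      have hDu := ih (linv y) u hulen hu1 huavoid
      have hD := D.wrap hyx hDu
      rw [List.cons_append] at hD
      exact hD
end Complete


section Grammar
variable {X : Type} [Fintype X] [DecidableEq X] {x : Letter X}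

lemma rule_sq_mem (a : Letter X) :
    (⟨a, [Symbol.nonterminal a, Symbol.nonterminal a]⟩ :
      ContextFreeRule (Letter X) (Letter X)) ∈ (gZ X x).rules := by
  show @Membership.mem (ContextFreeRule (Letter X) (Letter X)) (Finset (ContextFreeRule (Letter X) (Letter X))) _ (gZ X x).rules _
  simp only [gZ, Finset.mem_union, Finset.mem_image, Finset.mem_univ]
  exact Or.inl (Or.inl ⟨a, trivial, rfl⟩)

lemma rule_eps_mem (a : Letter X) :
    (⟨a, []⟩ : ContextFreeRule (Letter X) (Letter X)) ∈ (gZ X x).rules := by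
  show @Membership.mem (ContextFreeRule (Letter X) (Letter X)) (Finset (ContextFreeRule (Letter X) (Letter X))) _ (gZ X x).rules _
  simp only [gZ, Finset.mem_union, Finset.mem_image, Finset.mem_univ]
  exact Or.inl (Or.inr ⟨a, trivial, rfl⟩)

lemma rule_wrap_mem (a y : Letter X) (h : y ≠ a) :
    (⟨a, [Symbol.terminal y, Symbol.nonterminal (linv y), Symbol.terminal (linv y)]⟩ :
      ContextFreeRule (Letter X) (Letter X)) ∈ (gZ X x).rules := by
  show @Membership.mem (ContextFreeRule (Letter X) (Letter X)) (Finset (ContextFreeRule (Letter X) (Letter X))) _ (gZ X x).rules _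
  simp only [gZ, Finset.mem_union, Finset.mem_image, Finset.mem_filter, Finset.mem_product,
    Finset.mem_univ]
  exact Or.inr ⟨(a, y), ⟨⟨trivial, trivial⟩, h⟩, rfl⟩

lemma produces_of_rule {a : Letter X} {out : List (Symbol (Letter X) (Letter X))}
    (h : (⟨a, out⟩ : ContextFreeRule (Letter X) (Letter X)) ∈ (gZ X x).rules) :
    (gZ X x).Produces [Symbol.nonterminal a] out :=
  ⟨⟨a, out⟩, h, ContextFreeRule.Rewrites.input_output⟩

lemma D_derives {a : Letter X} {w : List (Letter X)} (h : D a w) :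
    (gZ X x).Derives [Symbol.nonterminal a] (w.map Symbol.terminal) := by
  induction h with
  | eps a => exact (produces_of_rule (rule_eps_mem a)).single
  | @cat a u v _ _ ihu ihv =>
    refine ((produces_of_rule (rule_sq_mem a)).single).trans ?_
    have h1 : (gZ X x).Derives ([Symbol.nonterminal a] ++ [Symbol.nonterminal a])
        (u.map Symbol.terminal ++ [Symbol.nonterminal a]) := ihu.append_right _
    have h2 : (gZ X x).Derives (u.map Symbol.terminal ++ [Symbol.nonterminal a])
        (u.map Symbol.terminal ++ v.map Symbol.terminal) := ihv.append_left _
    have := h1.trans h2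
    rw [List.map_append]; exact this
  | @wrap a y u hne _ ihu =>
    refine ((produces_of_rule (rule_wrap_mem a y hne)).single).trans ?_
    have h1 : (gZ X x).Derives
        (([Symbol.terminal y] ++ [Symbol.nonterminal (linv y)]) ++ [Symbol.terminal (linv y)])
        (([Symbol.terminal y] ++ u.map Symbol.terminal) ++ [Symbol.terminal (linv y)]) :=
      (ihu.append_left _).append_right _
    rw [List.map_append, List.map_cons]; exact h1

/-- Interpretation of sentential forms. -/
inductive Good {X : Type} : List (Symbol (Letter X) (Letter X)) → List (Letter X) → Prop
  | nil : Good [] []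
  | term {t : Letter X} {s w} : Good s w → Good (Symbol.terminal t :: s) (t :: w)
  | nt {a : Letter X} {s u w} : D a u → Good s w → Good (Symbol.nonterminal a :: s) (u ++ w)

omit [Fintype X] [DecidableEq X] in
lemma good_refl (w : List (Letter X)) : Good (w.map Symbol.terminal) w := by
  induction w with
  | nil => exact Good.nil
  | cons t w ih => exact Good.term ih

omit [Fintype X] [DecidableEq X] in
lemma good_append {s₁ s₂ : List (Symbol (Letter X) (Letter X))} {w₁ w₂ : List (Letter X)}
    (h1 : Good s₁ w₁) (h2 : Good s₂ w₂) : Good (s₁ ++ s₂) (w₁ ++ w₂) := by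
  induction h1 with
  | nil => exact h2
  | term _ ih => exact Good.term ih
  | nt hd _ ih =>
    rw [List.append_assoc]
    exact Good.nt hd ih

omit [Fintype X] [DecidableEq X] in
lemma good_split {s₁ s₂ : List (Symbol (Letter X) (Letter X))} :
    ∀ {w : List (Letter X)}, Good (s₁ ++ s₂) w →
      ∃ w₁ w₂, w = w₁ ++ w₂ ∧ Good s₁ w₁ ∧ Good s₂ w₂ := by
  induction s₁ with
  | nil => exact fun h => ⟨[], _, rfl, Good.nil, h⟩
  | cons sym s₁ ih =>
    intro w h
    cases h with
    | term h' =>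
      obtain ⟨w₁, w₂, rfl, hg1, hg2⟩ := ih h'
      exact ⟨_ :: w₁, w₂, rfl, Good.term hg1, hg2⟩
    | nt hd h' =>
      obtain ⟨w₁, w₂, rfl, hg1, hg2⟩ := ih h'
      exact ⟨_ ++ w₁, w₂, by rw [List.append_assoc], Good.nt hd hg1, hg2⟩

omit [Fintype X] [DecidableEq X] in
lemma good_single {a : Letter X} {u : List (Letter X)} (h : D a u) :
    Good [Symbol.nonterminal a] u := by
  have := Good.nt h Good.nil
  simpa using this

lemma good_of_produces {s t : List (Symbol (Letter X) (Letter X))} {w : List (Letter X)}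
    (hp : (gZ X x).Produces s t) (hg : Good t w) : Good s w := by
  obtain ⟨r, hrmem, hrw⟩ := hp
  obtain ⟨p, q, rfl, rfl⟩ := hrw.exists_parts
  obtain ⟨wpo, wq, rfl, hgpo, hgq⟩ := good_split hg
  obtain ⟨wp, wo, rfl, hgp, hgo⟩ := good_split hgpo
  change ContextFreeRule (Letter X) (Letter X) at r
  change @Membership.mem (ContextFreeRule (Letter X) (Letter X)) (Finset (ContextFreeRule (Letter X) (Letter X))) _ (gZ X x).rules r at hrmem
  simp only [gZ, Finset.mem_union, Finset.mem_image, Finset.mem_filter, Finset.mem_product,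
    Finset.mem_univ] at hrmem
  have hDo : D r.input wo := by
    rcases hrmem with (⟨a, -, ha⟩ | ⟨a, -, ha⟩) | ⟨⟨a, y⟩, ⟨-, hne⟩, ha⟩ <;> subst ha
    · cases hgo with
      | nt hd1 h' =>
        cases h' with
        | nt hd2 h'' =>
          cases h''
          simpa using D.cat hd1 hd2
    · cases hgo
      exact D.eps _
    · cases hgo with
      | term h' =>
        cases h' with
        | nt hd1 h'' =>
          cases h'' with
          | term h3 =>
            cases h3
            exact D.wrap hne hd1
  exact good_append (good_append hgp (good_single hDo)) hgq

lemma derives_good {s : List (Symbol (Letter X) (Letter X))} {w : List (Letter X)}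
    (h : (gZ X x).Derives s (w.map Symbol.terminal)) : Good s w := by
  induction h using Relation.ReflTransGen.head_induction_on with
  | refl => exact good_refl w
  | head hp _ ih => exact good_of_produces hp ih
end Grammar


/-- An idempotent word avoids `x` iff it is derivable from `Z_x`. -/
theorem avoids_iff_gZ_derivable {X : Type} [Fintype X] [DecidableEq X]
    (x : Letter X) (w : List (Letter X)) (hw : IsIdemWord w) :
    Avoids w x ↔ w ∈ (gZ X x).language := by
  rw [ContextFreeGrammar.mem_language_iff, avoids_iff]
  constructor
  · intro hav
    exact D_derives (D_complete w.length x w le_rfl hw hav)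
  · intro hder
    have hg : Good [Symbol.nonterminal x] w := derives_good hder
    cases hg with
    | nt hd h' =>
      cases h'
      rw [List.append_nil]
      have := (D_sound hd).2
      simpa using this
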